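/- Let A ∈ ℝ^{n×n}, B ∈ ℝ^{n×s}. Assume 𝒱 ∈ ℝ^{n×q} and V₊ ∈ ℝ^{n×d} satisfy 𝒱ᵀ𝒱 = I_q, V₊ᵀV₊ = I_d, 𝒱ᵀV₊ = 0, the Arnoldi relation A𝒱 = 𝒱𝒯 + V₊ T₊ Eᵀ with 𝒯 = 𝒱ᵀA𝒱, T₊ ∈ ℝ^{d×d} and E ∈ ℝ^{q×d} the last d columns of I_q, and B = 𝒱 B_m with B_m = 𝒱ᵀB. Let G : ℝ → ℝ^{q×q} be differentiable with G(t) symmetric for all t and Ġ(t) = 𝒯 G(t) + G(t) 𝒯ᵀ + B_m B_mᵀ, and set X_m(t) = 𝒱 G(t) 𝒱ᵀ. Then the residual R_m(t) = Ẋ_m(t) − A X_m(t) − X_m(t) Aᵀ − B Bᵀ has the explicit form R_m(t) = −( V₊ T₊ Ḡ(t) 𝒱ᵀ + 𝒱 Ḡ(t)ᵀ T₊ᵀ V₊ᵀ ), where Ḡ(t) = Eᵀ G(t) is the d×q matrix of the last d rows of G(t). -/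

import Mathlib

open Matrix Set

attribute [local instance] Matrix.normedAddCommGroup Matrix.normedSpace

/-- Under the block Arnoldi relation `A𝒱 = 𝒱𝒯 + V₊ T₊ Eᵀ` (with orthonormality
`𝒱ᵀ𝒱 = I`, `V₊ᵀV₊ = I`, `𝒱ᵀV₊ = 0`, `B = 𝒱 B_m`), if `G` is a symmetric solution of the
projected equation `Ġ = 𝒯 G + G 𝒯ᵀ + B_m B_mᵀ` and `X_m = 𝒱 G 𝒱ᵀ`, then the residual has the
explicit form `R_m(t) = −(V₊ T₊ Ḡ(t) 𝒱ᵀ + 𝒱 Ḡ(t)ᵀ T₊ᵀ V₊ᵀ)` with `Ḡ(t) = Eᵀ G(t)`. -/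
theorem residual_explicit_form
    (n s q d : ℕ) (hn : 0 < n) (hs : 0 < s) (hq : 0 < q) (hd : 0 < d) (hdq : d ≤ q)
    (A : Matrix (Fin n) (Fin n) ℝ) (B : Matrix (Fin n) (Fin s) ℝ)
    (V : Matrix (Fin n) (Fin q) ℝ) (Vp : Matrix (Fin n) (Fin d) ℝ)
    (hV : Vᵀ * V = 1) (hVp : Vpᵀ * Vp = 1) (hVVp : Vᵀ * Vp = 0)
    (T : Matrix (Fin q) (Fin q) ℝ) (hT : T = Vᵀ * A * V)
    (Tp : Matrix (Fin d) (Fin d) ℝ)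
    (E : Matrix (Fin q) (Fin d) ℝ)
    (hE : ∀ i j, E i j = if (i : ℕ) = q - d + (j : ℕ) then 1 else 0)
    (hArnoldi : A * V = V * T + Vp * Tp * Eᵀ)
    (Bm : Matrix (Fin q) (Fin s) ℝ) (hBm : Bm = Vᵀ * B) (hB : B = V * Bm)
    (G : ℝ → Matrix (Fin q) (Fin q) ℝ)
    (hGsymm : ∀ t, (G t)ᵀ = G t)
    (hG : ∀ t, HasDerivAt G (T * G t + G t * Tᵀ + Bm * Bmᵀ) t)
    (Xm : ℝ → Matrix (Fin n) (Fin n) ℝ) (hXm : ∀ t, Xm t = V * G t * Vᵀ)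
    (Xm' : ℝ → Matrix (Fin n) (Fin n) ℝ)
    (hXm' : ∀ t, HasDerivAt Xm (Xm' t) t)
    (R : ℝ → Matrix (Fin n) (Fin n) ℝ)
    (hR : ∀ t, R t = Xm' t - A * Xm t - Xm t * Aᵀ - B * Bᵀ) :
    ∀ t, R t = -(Vp * Tp * (Eᵀ * G t) * Vᵀ + V * (Eᵀ * G t)ᵀ * Tpᵀ * Vpᵀ) := by
  intro t
  set D := T * G t + G t * Tᵀ + Bm * Bmᵀ with hD
  have hL : HasDerivAt (fun u => V * G u * Vᵀ) (V * D * Vᵀ) t := by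
    have h := (LinearMap.toContinuousLinearMap
        ({ toFun := fun M => V * M * Vᵀ
           map_add' := fun M N => by rw [Matrix.mul_add, Matrix.add_mul]
           map_smul' := fun c M => by
             simp [Matrix.mul_smul, Matrix.smul_mul] } :
          Matrix (Fin q) (Fin q) ℝ →ₗ[ℝ] Matrix (Fin n) (Fin n) ℝ)).hasFDerivAt.comp_hasDerivAt
        t (hG t)
    simp only [Function.comp_def, LinearMap.coe_toContinuousLinearMap,
      LinearMap.coe_mk, AddHom.coe_mk] at h
    exact h
  have hXmfun : Xm = fun u => V * G u * Vᵀ := funext hXm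
  have hXm'eq : Xm' t = V * D * Vᵀ := by
    have := hXm' t
    rw [hXmfun] at this
    exact this.unique hL
  have h1 : A * (V * G t * Vᵀ) = V * T * (G t * Vᵀ) + Vp * Tp * Eᵀ * (G t * Vᵀ) := by
    rw [show A * (V * G t * Vᵀ) = (A * V) * (G t * Vᵀ) from by
      rw [Matrix.mul_assoc, Matrix.mul_assoc], hArnoldi, Matrix.add_mul]
  have h2 : V * G t * Vᵀ * Aᵀ = V * G t * (V * T)ᵀ + V * G t * (Vp * Tp * Eᵀ)ᵀ := by
    rw [Matrix.mul_assoc, show Vᵀ * Aᵀ = (A * V)ᵀ from (Matrix.transpose_mul A V).symm,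
      hArnoldi, Matrix.transpose_add, Matrix.mul_add]
  rw [hR t, hXm'eq, hXm t, hB, hD, h1, h2]
  simp only [Matrix.mul_add, Matrix.add_mul, Matrix.transpose_mul, Matrix.transpose_transpose,
    hGsymm t, Matrix.mul_assoc]
  abel
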